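/- Let X be a random variable with log-concave density on [-1,1] and E[X] = 0. Then for every t in [-1,1) with m_X(t) > 0, one has (m_X(t) - t) · m_X(t)/(1 - m_X(t)^2) ≤ 1/2. -/

import Mathlib

open MeasureTheory Set

-- quasiconcavity from log-concavity
lemma qc_of_lc (f : ℝ → ℝ) (hf_nonneg : ∀ x, 0 ≤ f x)
    (hf_lc : ∀ x ∈ Icc (-1 : ℝ) 1, ∀ y ∈ Icc (-1 : ℝ) 1, ∀ a b : ℝ,
      0 ≤ a → 0 ≤ b → a + b = 1 → f x ^ a * f y ^ b ≤ f (a * x + b * y)) :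
    ∀ x z y : ℝ, -1 ≤ x → x ≤ z → z ≤ y → y ≤ 1 → min (f x) (f y) ≤ f z := by
  intro x z y hx hxz hzy hy
  rcases eq_or_lt_of_le (hxz.trans hzy) with h | hxy
  · have hxz' : x = z := le_antisymm hxz (hzy.trans h.ge)
    subst hxz'
    exact min_le_left _ _
  · set a : ℝ := (y - z) / (y - x) with ha_def
    set b : ℝ := (z - x) / (y - x) with hb_def
    have hyx : (0:ℝ) < y - x := by linarith
    have ha : 0 ≤ a := div_nonneg (by linarith) hyx.le
    have hb : 0 ≤ b := div_nonneg (by linarith) hyx.le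
    have hab : a + b = 1 := by rw [ha_def, hb_def]; field_simp; ring
    have hz : a * x + b * y = z := by rw [ha_def, hb_def]; field_simp; ring
    have hmain := hf_lc x ⟨hx, by linarith⟩ y ⟨by linarith, hy⟩ a b ha hb hab
    rw [hz] at hmain
    refine le_trans ?_ hmain
    set c := min (f x) (f y) with hc
    rcases eq_or_lt_of_le (le_min (hf_nonneg x) (hf_nonneg y)) with h0 | h0
    · calc c = 0 := h0.symm
        _ ≤ _ := mul_nonneg (Real.rpow_nonneg (hf_nonneg x) a) (Real.rpow_nonneg (hf_nonneg y) b)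
    · have h1 : c ^ a ≤ f x ^ a := Real.rpow_le_rpow h0.le (min_le_left _ _) ha
      have h2 : c ^ b ≤ f y ^ b := Real.rpow_le_rpow h0.le (min_le_right _ _) hb
      calc c = c ^ (a + b) := by rw [hab, Real.rpow_one]
        _ = c ^ a * c ^ b := Real.rpow_add h0 a b
        _ ≤ f x ^ a * f y ^ b :=
          mul_le_mul h1 h2 (Real.rpow_nonneg h0.le b) (Real.rpow_nonneg (hf_nonneg x) a)

lemma fubini_tri (f : ℝ → ℝ) (hf : Integrable f) (t : ℝ) :
    ∫ s in Ioc t 1, (∫ u in Ioc s 1, f u) = ∫ u in Ioc t 1, (u - t) * f u := by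
  set g : ℝ → ℝ := hf.1.mk f with hg_def
  have hgm : StronglyMeasurable g := hf.1.stronglyMeasurable_mk
  have hfg : f =ᵐ[volume] g := hf.1.ae_eq_mk
  have hgint : Integrable g := hf.congr hfg
  have hinner : ∀ s : ℝ, ∫ u in Ioc s 1, f u = ∫ u in Ioc s 1, g u := fun s =>
    integral_congr_ae (ae_restrict_of_ae hfg)
  have houter : ∫ u in Ioc t 1, (u - t) * g u = ∫ u in Ioc t 1, (u - t) * f u :=
    integral_congr_ae (ae_restrict_of_ae (hfg.mono fun x hx => by dsimp only; rw [hx]))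
  set k : ℝ → ℝ → ℝ := fun s u => if s < u then g u else 0 with hk_def
  have hkmeas : Measurable (Function.uncurry k) := by
    apply Measurable.ite (measurableSet_lt measurable_fst measurable_snd)
    · exact hgm.measurable.comp measurable_snd
    · exact measurable_const
  set μ := volume.restrict (Ioc t 1) with hμ_def
  have hμfin : IsFiniteMeasure μ := by
    rw [hμ_def]
    exact ⟨by rw [Measure.restrict_apply_univ]; exact measure_Ioc_lt_top⟩
  -- integrability on the product
  have hknorm : ∀ s u : ℝ, ‖k s u‖ = if s < u then ‖g u‖ else 0 := by
    intro s u
    by_cases h : s < u <;> simp [hk_def, h]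
  have hinner_norm : ∀ s : ℝ, (∫ u, ‖k s u‖ ∂μ) = ∫ u in Ioc t 1 ∩ Ioi s, ‖g u‖ := by
    intro s
    rw [hμ_def, ← setIntegral_indicator measurableSet_Ioi]
    refine setIntegral_congr_fun measurableSet_Ioc fun u _ => ?_
    by_cases h : s < u <;> simp [hknorm, indicator, mem_Ioi, h]
  have hφanti : Antitone (fun s => ∫ u in Ioc t 1 ∩ Ioi s, ‖g u‖) := by
    intro s s' hss'
    apply setIntegral_mono_set (hgint.norm.integrableOn)
    · exact Filter.Eventually.of_forall fun x => norm_nonneg _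
    · exact HasSubset.Subset.eventuallyLE (inter_subset_inter_right _ (Ioi_subset_Ioi hss'))
  have hφbound : ∀ s : ℝ, (∫ u in Ioc t 1 ∩ Ioi s, ‖g u‖) ≤ ∫ u, ‖g u‖ := fun s =>
    setIntegral_le_integral hgint.norm (Filter.Eventually.of_forall fun x => norm_nonneg _)
  have hφnonneg : ∀ s : ℝ, 0 ≤ ∫ u in Ioc t 1 ∩ Ioi s, ‖g u‖ := fun s =>
    setIntegral_nonneg ((measurableSet_Ioc).inter measurableSet_Ioi)
      (fun x _ => norm_nonneg _)
  have hkint : Integrable (Function.uncurry k) (μ.prod μ) := by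
    rw [integrable_prod_iff hkmeas.aestronglyMeasurable]
    constructor
    · refine Filter.Eventually.of_forall fun s => ?_
      have : (fun u => Function.uncurry k (s, u)) = (Ioi s).indicator g := by
        funext u
        by_cases h : s < u <;> simp [Function.uncurry, hk_def, indicator, mem_Ioi, h]
      rw [this]
      exact (hgint.integrableOn).indicator measurableSet_Ioi
    · have heq : (fun s => ∫ u, ‖Function.uncurry k (s, u)‖ ∂μ)
          = fun s => ∫ u in Ioc t 1 ∩ Ioi s, ‖g u‖ := by
        funext s; exact hinner_norm s
      rw [heq]
      refine Integrable.mono' (integrable_const (∫ u, ‖g u‖))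
        (hφanti.measurable.aestronglyMeasurable) ?_
      refine Filter.Eventually.of_forall fun s => ?_
      rw [Real.norm_eq_abs, abs_of_nonneg (hφnonneg s)]
      exact hφbound s
  have hswap := integral_integral_swap hkint
  -- LHS
  have hLHS : (∫ s, ∫ u, k s u ∂μ ∂μ) = ∫ s in Ioc t 1, (∫ u in Ioc s 1, g u) := by
    rw [hμ_def]
    refine setIntegral_congr_fun measurableSet_Ioc fun s hs => ?_
    have h1 : (fun u => k s u) = (Ioi s).indicator g := by
      funext u
      by_cases h : s < u <;> simp [hk_def, indicator, mem_Ioi, h]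
    have h2 : Ioc t 1 ∩ Ioi s = Ioc s 1 := by
      ext u
      simp only [mem_inter_iff, mem_Ioc, mem_Ioi]
      constructor
      · rintro ⟨⟨_, hu1⟩, hsu⟩; exact ⟨hsu, hu1⟩
      · rintro ⟨hsu, hu1⟩; exact ⟨⟨hs.1.trans hsu, hu1⟩, hsu⟩
    rw [h1, setIntegral_indicator measurableSet_Ioi, h2]
  -- RHS
  have hRHS : (∫ u, ∫ s, k s u ∂μ ∂μ) = ∫ u in Ioc t 1, (u - t) * g u := by
    rw [hμ_def]
    refine setIntegral_congr_fun measurableSet_Ioc fun u hu => ?_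
    have h1 : (fun s => k s u) = (Iio u).indicator (fun _ => g u) := by
      funext s
      by_cases h : s < u <;> simp [hk_def, indicator, mem_Iio, h]
    rw [h1, setIntegral_indicator measurableSet_Iio, setIntegral_const]
    have h2 : Ioc t 1 ∩ Iio u = Ioo t u := by
      ext s
      simp only [mem_inter_iff, mem_Ioc, mem_Iio, mem_Ioo]
      constructor
      · rintro ⟨⟨hts, _⟩, hsu⟩; exact ⟨hts, hsu⟩
      · rintro ⟨hts, hsu⟩; exact ⟨⟨hts, (le_of_lt hsu).trans hu.2⟩, hsu⟩
    rw [h2, measureReal_def, Real.volume_Ioo, ENNReal.toReal_ofReal (by linarith [hu.1] : (0:ℝ) ≤ u - t)]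
    simp [smul_eq_mul]
  calc ∫ s in Ioc t 1, (∫ u in Ioc s 1, f u)
      = ∫ s in Ioc t 1, (∫ u in Ioc s 1, g u) := by
        refine setIntegral_congr_fun measurableSet_Ioc fun s _ => hinner s
    _ = ∫ u in Ioc t 1, (u - t) * g u := by rw [← hLHS, ← hRHS]; exact hswap
    _ = ∫ u in Ioc t 1, (u - t) * f u := houter

-- helper: integrability of (c + d*u) * f u on bounded Ioc
lemma int_poly_mul (f : ℝ → ℝ) (hf : Integrable f) (c d a b : ℝ) :
    IntegrableOn (fun u => (c + d * u) * f u) (Ioc a b) := by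
  have hasm : AEStronglyMeasurable (fun u => (c + d * u) * f u)
      (volume.restrict (Ioc a b)) :=
    ((continuous_const.add (continuous_const.mul continuous_id)).aestronglyMeasurable).mul
      hf.1.restrict
  refine Integrable.mono' (((hf.norm.const_mul (|c| + |d| * (|a| + |b|)))).integrableOn)
    hasm ?_
  filter_upwards [ae_restrict_mem measurableSet_Ioc] with u hu
  have hub : |u| ≤ |a| + |b| := by
    rw [abs_le]
    constructor
    · have := hu.1
      have h1 : -|a| ≤ a := neg_abs_le a
      have h2 : (0:ℝ) ≤ |b| := abs_nonneg b
      linarith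
    · have := hu.2
      have h1 : b ≤ |b| := le_abs_self b
      have h2 : (0:ℝ) ≤ |a| := abs_nonneg a
      linarith
  have h3 : |c + d * u| ≤ |c| + |d| * (|a| + |b|) := by
    calc |c + d * u| ≤ |c| + |d * u| := abs_add_le _ _
      _ = |c| + |d| * |u| := by rw [abs_mul]
      _ ≤ |c| + |d| * (|a| + |b|) := by
          have := mul_le_mul_of_nonneg_left hub (abs_nonneg d)
          linarith
  calc ‖(c + d * u) * f u‖ = |c + d * u| * ‖f u‖ := by
        rw [Real.norm_eq_abs, abs_mul]; rfl
    _ ≤ (|c| + |d| * (|a| + |b|)) * ‖f u‖ := by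
        have : (0:ℝ) ≤ ‖f u‖ := norm_nonneg _
        exact mul_le_mul_of_nonneg_right h3 this

-- single crossing of D
lemma single_cross (f : ℝ → ℝ) (hf_nonneg : ∀ x, 0 ≤ f x) (hf : Integrable f)
    (hqc : ∀ x z y : ℝ, -1 ≤ x → x ≤ z → z ≤ y → y ≤ 1 → min (f x) (f y) ≤ f z)
    (s1 s2 : ℝ) (h1 : -1 ≤ s1) (h12 : s1 ≤ s2) (h2 : s2 ≤ 1)
    (hD1 : (∫ u in Ioc s1 1, f u) - (1 - s1) * f s1 < 0) :
    (∫ u in Ioc s2 1, f u) - (1 - s2) * f s2 ≤ 0 := by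
  by_cases hcase : ∀ u ∈ Ioc s2 1, f u ≤ f s2
  · have hmono : (∫ u in Ioc s2 1, f u) ≤ ∫ _ in Ioc s2 1, f s2 :=
      setIntegral_mono_on hf.integrableOn (integrableOn_const measure_Ioc_lt_top.ne)
        measurableSet_Ioc hcase
    rw [setIntegral_const, measureReal_def, Real.volume_Ioc, smul_eq_mul,
      ENNReal.toReal_ofReal] at hmono
    · linarith
    · by_cases h : s2 ≤ 1 <;> linarith
  · push_neg at hcase
    obtain ⟨y, hy, hfy⟩ := hcase
    have hfy1 : f s1 ≤ f s2 := by
      have := hqc s1 s2 y h1 h12 hy.1.le hy.2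
      rcases min_le_iff.1 (le_refl (min (f s1) (f y))) with _ | _
      · rcases le_total (f s1) (f y) with h | h
        · rwa [min_eq_left h] at this
        · rw [min_eq_right h] at this; linarith
      · rcases le_total (f s1) (f y) with h | h
        · rwa [min_eq_left h] at this
        · rw [min_eq_right h] at this; linarith
    have hlow : ∀ u ∈ Ioc s1 s2, f s1 ≤ f u := by
      intro u hu
      have := hqc s1 u y h1 hu.1.le (hu.2.trans hy.1.le) hy.2
      rwa [min_eq_left (by linarith : f s1 ≤ f y)] at this
    have hsplit : (∫ u in Ioc s1 1, f u)
        = (∫ u in Ioc s1 s2, f u) + ∫ u in Ioc s2 1, f u := by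
      rw [← Set.Ioc_union_Ioc_eq_Ioc h12 h2]
      exact setIntegral_union (Set.Ioc_disjoint_Ioc_of_le le_rfl) measurableSet_Ioc
        hf.integrableOn hf.integrableOn
    have hlower : (s2 - s1) * f s1 ≤ ∫ u in Ioc s1 s2, f u := by
      have h' : (∫ _ in Ioc s1 s2, f s1) ≤ ∫ u in Ioc s1 s2, f u :=
        setIntegral_mono_on (integrableOn_const measure_Ioc_lt_top.ne)
          hf.integrableOn measurableSet_Ioc hlow
      rwa [setIntegral_const, measureReal_def, Real.volume_Ioc, smul_eq_mul,
        ENNReal.toReal_ofReal] at h'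
      by_cases h : s1 ≤ s2 <;> linarith
    nlinarith [hfy1, hlower, hsplit, hD1]

theorem derived_ineq_of_logConcave (f : ℝ → ℝ)
    (hf_nonneg : ∀ x, 0 ≤ f x)
    (hf_supp : ∀ x, x ∉ Icc (-1 : ℝ) 1 → f x = 0)
    (hf_prob : ∫ x, f x = 1)
    (hf_mean : ∫ x, x * f x = 0)
    (hf_lc : ∀ x ∈ Icc (-1 : ℝ) 1, ∀ y ∈ Icc (-1 : ℝ) 1, ∀ a b : ℝ,
      0 ≤ a → 0 ≤ b → a + b = 1 → f x ^ a * f y ^ b ≤ f (a * x + b * y))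
    (m : ℝ → ℝ)
    (hm : ∀ t, m t = (∫ x in Ioi t, x * f x) / (∫ x in Ioi t, f x)) :
    ∀ t ∈ Ico (-1 : ℝ) 1, 0 < m t →
      (m t - t) * (m t / (1 - m t ^ 2)) ≤ 1 / 2 := by
  intro t ht hmt
  have ht1 : t < 1 := ht.2
  have htm1 : -1 ≤ t := ht.1
  -- integrability
  have hf_int : Integrable f := by
    by_contra h
    rw [integral_undef h] at hf_prob
    norm_num at hf_prob
  have hxf_int : Integrable (fun x => x * f x) := by
    have h1 : IntegrableOn (fun x => x * f x) (Icc (-1:ℝ) 1) := by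
      have := int_poly_mul f hf_int 0 1 (-2) 2
      have h2 : IntegrableOn (fun u => (0 + 1 * u) * f u) (Icc (-1:ℝ) 1) :=
        this.mono_set (fun x hx => ⟨by linarith [hx.1], by linarith [hx.2]⟩)
      exact h2.congr_fun (fun u _ => by ring) measurableSet_Icc
    have := h1.integrable_of_forall_notMem_eq_zero ?_
    · exact this
    · intro x hx
      rw [hf_supp x hx, mul_zero]
  have hqc := qc_of_lc f hf_nonneg hf_lc
  -- D and its integrability
  set H : ℝ → ℝ := fun s => ∫ u in Ioc s 1, f u with hH_def
  have hH_anti : Antitone H := by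
    intro s s' hss'
    apply setIntegral_mono_set hf_int.integrableOn
      (Filter.Eventually.of_forall fun x => hf_nonneg x)
    exact HasSubset.Subset.eventuallyLE (Ioc_subset_Ioc_left hss')
  have hH_nonneg : ∀ s, 0 ≤ H s := fun s =>
    setIntegral_nonneg measurableSet_Ioc fun x _ => hf_nonneg x
  have hH_le : ∀ s, H s ≤ 1 := by
    intro s
    rw [← hf_prob]
    exact setIntegral_le_integral hf_int (Filter.Eventually.of_forall fun x => hf_nonneg x)
  have hH_int : ∀ a b : ℝ, IntegrableOn H (Ioc a b) := by
    intro a b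
    have hc : IntegrableOn (fun _ => (1:ℝ)) (Ioc a b) volume :=
      integrableOn_const measure_Ioc_lt_top.ne
    refine Integrable.mono' hc (hH_anti.measurable.aestronglyMeasurable.restrict) ?_
    refine Filter.Eventually.of_forall fun s => ?_
    rw [Real.norm_eq_abs, abs_of_nonneg (hH_nonneg s)]
    exact hH_le s
  have hG2_int : ∀ a b : ℝ, IntegrableOn (fun s => (1 - s) * f s) (Ioc a b) := by
    intro a b
    exact (int_poly_mul f hf_int 1 (-1) a b).congr_fun (fun u _ => by ring) measurableSet_Ioc
  set D : ℝ → ℝ := fun s => H s - (1 - s) * f s with hD_def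
  have hD_int : ∀ a b : ℝ, IntegrableOn D (Ioc a b) := fun a b =>
    (hH_int a b).sub (hG2_int a b)
  -- the key identity
  have hIden : ∀ a : ℝ, (∫ s in Ioc a 1, D s) = ∫ u in Ioc a 1, (2*u - 1 - a) * f u := by
    intro a
    have i1 : IntegrableOn (fun u => (u - a) * f u) (Ioc a 1) :=
      (int_poly_mul f hf_int (-a) 1 a 1).congr_fun (fun u _ => by ring) measurableSet_Ioc
    have i2 : IntegrableOn (fun u => (1 - u) * f u) (Ioc a 1) :=
      (int_poly_mul f hf_int 1 (-1) a 1).congr_fun (fun u _ => by ring) measurableSet_Ioc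
    calc (∫ s in Ioc a 1, D s)
        = (∫ s in Ioc a 1, H s) - ∫ s in Ioc a 1, (1 - s) * f s :=
          integral_sub (hH_int a 1) (hG2_int a 1)
      _ = (∫ u in Ioc a 1, (u - a) * f u) - ∫ u in Ioc a 1, (1 - u) * f u := by
          rw [fubini_tri f hf_int a]
      _ = ∫ u in Ioc a 1, ((u - a) * f u - (1 - u) * f u) := (integral_sub i1 i2).symm
      _ = ∫ u in Ioc a 1, (2*u - 1 - a) * f u := by
          refine setIntegral_congr_fun measurableSet_Ioc fun u _ => ?_
          ring
  -- mean zero in Ioc form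
  have hmean' : (∫ u in Ioc (-1 : ℝ) 1, u * f u) = 0 := by
    rw [← integral_Icc_eq_integral_Ioc]
    rw [setIntegral_eq_integral_of_forall_compl_eq_zero
      (fun x hx => by rw [hf_supp x hx, mul_zero])]
    exact hf_mean
  have hW0 : (∫ u in Ioc (-1 : ℝ) 1, (2*u - 1 - (-1)) * f u) = 0 := by
    have h1 : (∫ u in Ioc (-1 : ℝ) 1, (2*u - 1 - (-1)) * f u)
        = ∫ u in Ioc (-1 : ℝ) 1, 2 * (u * f u) := by
      refine setIntegral_congr_fun measurableSet_Ioc fun u _ => ?_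
      ring
    rw [h1, integral_const_mul, hmean']
    ring
  -- key inequality
  have key : (∫ u in Ioc t 1, (2*u - 1 - t) * f u) ≤ 0 := by
    by_cases hcase : ∀ s ∈ Ioc (-1 : ℝ) t, 0 ≤ D s
    · have hpos : 0 ≤ ∫ s in Ioc (-1 : ℝ) t, D s :=
        setIntegral_nonneg measurableSet_Ioc hcase
      have hsplit : (∫ s in Ioc (-1 : ℝ) 1, D s)
          = (∫ s in Ioc (-1 : ℝ) t, D s) + ∫ s in Ioc t 1, D s := by
        rw [← Set.Ioc_union_Ioc_eq_Ioc htm1 ht1.le]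
        exact setIntegral_union (Set.Ioc_disjoint_Ioc_of_le le_rfl) measurableSet_Ioc
          (hD_int (-1) t) (hD_int t 1)
      have e1 := hIden (-1)
      have e2 := hIden t
      rw [hW0] at e1
      linarith [e1, e2, hsplit, hpos]
    · push_neg at hcase
      obtain ⟨s0, hs0, hs0D⟩ := hcase
      have hneg : ∀ u ∈ Ioc t 1, D u ≤ 0 := fun u hu =>
        single_cross f hf_nonneg hf_int hqc s0 u hs0.1.le (hs0.2.trans hu.1.le) hu.2 hs0D
      have h0 : (∫ s in Ioc t 1, D s) ≤ 0 :=
        setIntegral_nonpos measurableSet_Ioc hneg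
      rw [hIden t] at h0
      exact h0
  -- translate to N, P
  set P : ℝ := ∫ x in Ioc t 1, f x with hP_def
  set N : ℝ := ∫ x in Ioc t 1, x * f x with hN_def
  have hio_f : (∫ x in Ioi t, f x) = P := by
    rw [← Set.Ioc_union_Ioi_eq_Ioi ht1.le,
      setIntegral_union (Set.Ioc_disjoint_Ioi le_rfl) measurableSet_Ioi
        hf_int.integrableOn hf_int.integrableOn]
    have : (∫ x in Ioi (1:ℝ), f x) = 0 := by
      rw [setIntegral_congr_fun measurableSet_Ioi
        (fun x hx => hf_supp x (fun hc => absurd hc.2 (not_le.2 hx)) : EqOn f (fun _ => (0:ℝ)) (Ioi 1))]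
      simp
    rw [this]
    ring
  have hio_xf : (∫ x in Ioi t, x * f x) = N := by
    rw [← Set.Ioc_union_Ioi_eq_Ioi ht1.le,
      setIntegral_union (Set.Ioc_disjoint_Ioi le_rfl) measurableSet_Ioi
        hxf_int.integrableOn hxf_int.integrableOn]
    have : (∫ x in Ioi (1:ℝ), x * f x) = 0 := by
      rw [setIntegral_congr_fun measurableSet_Ioi
        (fun x hx => by
          show x * f x = 0
          rw [hf_supp x (fun hc => absurd hc.2 (not_le.2 hx)), mul_zero]
          : EqOn (fun x => x * f x) (fun _ => (0:ℝ)) (Ioi 1))]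
      simp
    rw [this]
    ring
  have key2 : 2 * N - (1 + t) * P ≤ 0 := by
    have h1 : (∫ u in Ioc t 1, (2*u - 1 - t) * f u)
        = (∫ u in Ioc t 1, 2 * (u * f u)) - ∫ u in Ioc t 1, (1 + t) * f u := by
      rw [← integral_sub ((hxf_int.integrableOn).const_mul 2)
        ((hf_int.integrableOn).const_mul (1 + t))]
      refine setIntegral_congr_fun measurableSet_Ioc fun u _ => ?_
      ring
    rw [h1, integral_const_mul, integral_const_mul] at key
    rw [hN_def, hP_def]
    linarith [key]
  -- finish
  have hP_nonneg : 0 ≤ P :=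
    setIntegral_nonneg measurableSet_Ioc fun x _ => hf_nonneg x
  have hmt_val : m t = N / P := by rw [hm t, hio_f, hio_xf]
  have hP_pos : 0 < P := by
    rcases eq_or_lt_of_le hP_nonneg with h | h
    · exfalso
      rw [hmt_val, ← h, div_zero] at hmt
      exact lt_irrefl 0 hmt
    · exact h
  have hN_eq : N = m t * P := by
    rw [hmt_val, div_mul_cancel₀]
    exact ne_of_gt hP_pos
  have hm2 : 2 * m t ≤ 1 + t := by
    rw [hN_eq] at key2
    nlinarith [key2, hP_pos]
  have hmlt1 : m t < 1 := by linarith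
  have hden : 0 < 1 - m t ^ 2 := by nlinarith [hmt, hmlt1]
  rw [mul_div_assoc' (m t - t) (m t) (1 - m t ^ 2), div_le_iff₀ hden]
  nlinarith [hm2, hmt, ht1, sq_nonneg (1 - t), mul_nonneg (by linarith : (0:ℝ) ≤ 1 + t - 2 * m t) hmt.le]
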